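/- Let 0 < K₁ ≤ K₂ and let 0 ≤ b̂₁ ≤ b̂₂. For i = 1, 2 let V_i : [0,∞) → ℝ be continuous, continuously differentiable on (0,∞), twice continuously differentiable on (0,∞)∖{b̂₁,b̂₂}, and concave, and assume: V_i(0) = 0; V_i(x) → K_i/r as x → ∞; V_i'(x) > 1 for 0 < x < b̂_i; V_i'(b̂_i) = 1 if b̂_i > 0; V_i'(x) < 1 for x > b̂_i; and ½σ(x)²V_i''(x) + (μ(x) − K₁·𝟙_{x≥b̂₁} − K₂·𝟙_{x≥b̂₂})·V_i'(x) − r·V_i(x) + K_i·𝟙_{x≥b̂_i} = 0 for all x ∈ (0,∞)∖{b̂₁,b̂₂}. Assume moreover that if b̂₁ > 0 then there exist a function ψ : [0,b̂₁] → ℝ with ψ(x) > 0 and ψ'(x) > 0 for 0 < x ≤ b̂₁, and constants A₁, A₂ > 0, such that V_i = A_i·ψ on [0,b̂₁] for i = 1,2. Then V₁(x) ≤ V₂(x) for all x ≥ 0. -/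

import Mathlib

open Set Filter

lemma secondDerivTest {W : ℝ → ℝ} {x₀ q : ℝ}
    (hd : ∀ᶠ x in nhds x₀, DifferentiableAt ℝ W x)
    (hmin : IsLocalMin W x₀)
    (hq : HasDerivAt (deriv W) q x₀) : 0 ≤ q := by
  by_contra hqneg
  push_neg at hqneg
  have h0 : deriv W x₀ = 0 := hmin.deriv_eq_zero
  have hslope : Tendsto (slope (deriv W) x₀) (nhdsWithin x₀ {x₀}ᶜ) (nhds q) :=
    hasDerivAt_iff_tendsto_slope.mp hq
  have h1 : ∀ᶠ x in nhdsWithin x₀ {x₀}ᶜ, slope (deriv W) x₀ x < 0 :=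
    hslope.eventually (eventually_lt_nhds hqneg)
  have h2 : ∀ᶠ x in nhdsWithin x₀ (Ioi x₀), deriv W x < 0 := by
    filter_upwards [nhdsWithin_mono x₀ (fun y (hy : y ∈ Ioi x₀) => ne_of_gt hy) h1,
      self_mem_nhdsWithin] with y hy hy'
    rw [slope_def_field, h0, sub_zero] at hy
    have hypos : 0 < y - x₀ := sub_pos.mpr hy'
    have := div_neg_iff.mp hy
    rcases this with ⟨_, h⟩ | ⟨h, _⟩
    · linarith
    · exact h
  have h3 : ∀ᶠ x in nhdsWithin x₀ (Ioi x₀),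
      deriv W x < 0 ∧ DifferentiableAt ℝ W x ∧ W x₀ ≤ W x := by
    refine h2.and (Filter.Eventually.and ?_ ?_)
    · exact nhdsWithin_le_nhds hd
    · exact nhdsWithin_le_nhds hmin
  obtain ⟨u, hu, hsub⟩ := mem_nhdsGT_iff_exists_Ioo_subset.mp h3
  set c := (x₀ + u) / 2 with hc
  have hx₀u : x₀ < u := hu
  have hx₀c : x₀ < c := by simp only [hc]; linarith
  have hcu : c < u := by simp only [hc]; linarith
  have hdiffx₀ : DifferentiableAt ℝ W x₀ := hd.self_of_nhds
  have hcont : ContinuousOn W (Icc x₀ c) := by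
    intro y hy
    rcases eq_or_lt_of_le hy.1 with h | h
    · exact (h ▸ hdiffx₀.continuousAt).continuousWithinAt
    · exact ((hsub ⟨h, lt_of_le_of_lt hy.2 hcu⟩).2.1.continuousAt).continuousWithinAt
  have hanti : StrictAntiOn W (Icc x₀ c) := by
    apply strictAntiOn_of_deriv_neg (convex_Icc _ _) hcont
    intro y hy
    rw [interior_Icc] at hy
    exact (hsub ⟨hy.1, lt_trans hy.2 hcu⟩).1
  have h4 : W c < W x₀ := hanti ⟨le_rfl, hx₀c.le⟩ ⟨hx₀c.le, le_rfl⟩ hx₀c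
  have h5 : W x₀ ≤ W c := (hsub ⟨hx₀c, hcu⟩).2.2
  linarith


/-- value-ordering in the asymmetric game: if 0 < K₁ ≤ K₂ and
0 ≤ b̂₁ ≤ b̂₂ with V₁, V₂ candidate equilibrium value functions of threshold type,
then V₁(x) ≤ V₂(x) for all x ≥ 0.  Here the indices are 0, 1. -/
theorem stmt_6
    (r : ℝ) (hr : 0 < r)
    (μ σ : ℝ → ℝ) (hμ : Continuous μ) (hσ : Continuous σ)
    (K b : Fin 2 → ℝ) (V : Fin 2 → ℝ → ℝ)
    (hKpos : 0 < K 0) (hKord : K 0 ≤ K 1)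
    (hbnn : ∀ i, 0 ≤ b i) (hbord : b 0 ≤ b 1)
    (hcont : ∀ i, ContinuousOn (V i) (Ici (0:ℝ)))
    (hC1 : ∀ i, ContDiffOn ℝ 1 (V i) (Ioi (0:ℝ)))
    (hC2 : ∀ i, ContDiffOn ℝ 2 (V i) (Ioi (0:ℝ) \ {b 0, b 1}))
    (hconc : ∀ i, ConcaveOn ℝ (Ici (0:ℝ)) (V i))
    (h0 : ∀ i, V i 0 = 0)
    (hlim : ∀ i, Tendsto (V i) atTop (nhds (K i / r)))
    (hd_gt : ∀ i, ∀ x, 0 < x → x < b i → 1 < deriv (V i) x)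
    (hd_eq : ∀ i, 0 < b i → deriv (V i) (b i) = 1)
    (hd_lt : ∀ i, ∀ x, b i < x → deriv (V i) x < 1)
    (hODE : ∀ i, ∀ x, 0 < x → x ≠ b 0 → x ≠ b 1 →
      (1/2) * σ x ^ 2 * deriv (deriv (V i)) x
        + (μ x - K 0 * (if b 0 ≤ x then 1 else 0) - K 1 * (if b 1 ≤ x then 1 else 0))
            * deriv (V i) x
        - r * V i x + K i * (if b i ≤ x then 1 else 0) = 0)
    (hpsi : 0 < b 0 → ∃ (ψ : ℝ → ℝ) (A : Fin 2 → ℝ),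
      (∀ x, 0 < x → x ≤ b 0 → 0 < ψ x ∧ 0 < deriv ψ x) ∧
      (∀ i, 0 < A i) ∧
      (∀ i, ∀ x, 0 ≤ x → x ≤ b 0 → V i x = A i * ψ x)) :
    ∀ x ≥ (0:ℝ), V 0 x ≤ V 1 x := by
  set W : ℝ → ℝ := fun x => V 1 x - V 0 x with hW
  suffices h : ∀ x ≥ (0:ℝ), 0 ≤ W x by
    intro x hx
    have := h x hx
    simp only [hW] at this
    linarith
  -- basic facts
  have hVdiff : ∀ i, ∀ x : ℝ, 0 < x → DifferentiableAt ℝ (V i) x := fun i x hx =>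
    (((hC1 i).differentiableOn one_ne_zero).differentiableAt (isOpen_Ioi.mem_nhds hx))
  have hWdiff : ∀ x : ℝ, 0 < x → DifferentiableAt ℝ W x := fun x hx =>
    (hVdiff 1 x hx).sub (hVdiff 0 x hx)
  have hderivW : ∀ x : ℝ, 0 < x → deriv W x = deriv (V 1) x - deriv (V 0) x := fun x hx =>
    deriv_sub (hVdiff 1 x hx) (hVdiff 0 x hx)
  have hWcont : ContinuousOn W (Ici (0:ℝ)) := (hcont 1).sub (hcont 0)
  have hW0 : W 0 = 0 := by simp [hW, h0 0, h0 1]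
  -- Step 1: on [0, b 0]
  have step1 : ∀ x : ℝ, 0 ≤ x → x ≤ b 0 → 0 ≤ W x := by
    rcases eq_or_lt_of_le (hbnn 0) with hb0 | hb0
    · intro x hx1 hx2
      have : x = 0 := le_antisymm (hb0 ▸ hx2) hx1
      rw [this, hW0]
    · obtain ⟨ψ, A, hψ, hA, hVA⟩ := hpsi hb0
      have hψd : DifferentiableAt ℝ ψ (b 0) := by
        by_contra h
        have := deriv_zero_of_not_differentiableAt h
        have := (hψ (b 0) hb0 le_rfl).2
        linarith
      have hud : UniqueDiffWithinAt ℝ (Icc (0:ℝ) (b 0)) (b 0) :=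
        (uniqueDiffOn_Icc hb0) (b 0) ⟨hb0.le, le_rfl⟩
      have key : ∀ i, deriv (V i) (b 0) = A i * deriv ψ (b 0) := by
        intro i
        have h1 : HasDerivWithinAt (V i) (deriv (V i) (b 0)) (Icc (0:ℝ) (b 0)) (b 0) :=
          ((hVdiff i (b 0) hb0).hasDerivAt).hasDerivWithinAt
        have h2 : HasDerivWithinAt (fun x => A i * ψ x) (A i * deriv ψ (b 0))
            (Icc (0:ℝ) (b 0)) (b 0) := (hψd.hasDerivAt.const_mul (A i)).hasDerivWithinAt
        have h3 : HasDerivWithinAt (V i) (A i * deriv ψ (b 0)) (Icc (0:ℝ) (b 0)) (b 0) :=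
          h2.congr (fun x hx => hVA i x hx.1 hx.2) (hVA i (b 0) hb0.le le_rfl)
        rw [← h1.derivWithin hud, h3.derivWithin hud]
      have hψ' : 0 < deriv ψ (b 0) := (hψ (b 0) hb0 le_rfl).2
      have hd1 : (1:ℝ) ≤ deriv (V 1) (b 0) := by
        rcases eq_or_lt_of_le hbord with he | hl
        · rw [he]; exact le_of_eq (hd_eq 1 (he ▸ hb0)).symm
        · exact (hd_gt 1 (b 0) hb0 hl).le
      have hAord : A 0 ≤ A 1 := by
        have e0 : A 0 * deriv ψ (b 0) = 1 := (key 0) ▸ hd_eq 0 hb0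
        have e1 : (1:ℝ) ≤ A 1 * deriv ψ (b 0) := (key 1) ▸ hd1
        nlinarith
      intro x hx1 hx2
      rcases eq_or_lt_of_le hx1 with hx0 | hx0
      · rw [← hx0, hW0]
      · have hψx : 0 < ψ x := (hψ x hx0 hx2).1
        have : W x = (A 1 - A 0) * ψ x := by
          simp only [hW, hVA 0 x hx1 hx2, hVA 1 x hx1 hx2]; ring
        rw [this]
        exact mul_nonneg (by linarith) hψx.le
  -- Step 2: on [0, b 1]
  have step2 : ∀ x : ℝ, 0 ≤ x → x ≤ b 1 → 0 ≤ W x := by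
    intro x hx1 hx2
    rcases le_or_gt x (b 0) with h | h
    · exact step1 x hx1 h
    · have hsm : StrictMonoOn W (Icc (b 0) (b 1)) := by
        apply strictMonoOn_of_deriv_pos (convex_Icc _ _)
          (hWcont.mono (fun y hy => le_trans (hbnn 0) hy.1))
        intro y hy
        rw [interior_Icc] at hy
        have hy0 : 0 < y := lt_of_le_of_lt (hbnn 0) hy.1
        rw [hderivW y hy0]
        have := hd_gt 1 y hy0 hy.2
        have := hd_lt 0 y hy.1
        linarith
      have hlt : W (b 0) < W x := hsm ⟨le_rfl, hbord⟩ ⟨h.le, hx2⟩ h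
      have := step1 (b 0) (hbnn 0) le_rfl
      linarith
  -- Step 3: on [b 1, ∞)
  have step3 : ∀ x : ℝ, b 1 ≤ x → 0 ≤ W x := by
    intro x hx
    by_contra hneg
    push_neg at hneg
    have hWb1 : 0 ≤ W (b 1) := step2 (b 1) (hbnn 1) le_rfl
    have hb1x : b 1 < x := by
      rcases eq_or_lt_of_le hx with he | hl
      · exfalso; rw [← he] at hneg; linarith
      · exact hl
    set L : ℝ := K 1 / r - K 0 / r with hL
    have hLnn : 0 ≤ L := by
      have : K 0 / r ≤ K 1 / r := by gcongr
      simp only [hL]; linarith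
    have hWlim : Tendsto W atTop (nhds L) := (hlim 1).sub (hlim 0)
    have hev : ∀ᶠ y in atTop, W x < W y :=
      hWlim.eventually (eventually_gt_nhds (lt_of_lt_of_le hneg hLnn))
    obtain ⟨M₀, hM₀⟩ := eventually_atTop.mp hev
    set M : ℝ := max M₀ x with hM
    have hxM : x ≤ M := le_max_right _ _
    have hb1M : b 1 ≤ M := le_trans hx hxM
    have hKc : ContinuousOn W (Icc (b 1) M) :=
      hWcont.mono (fun y hy => le_trans (hbnn 1) hy.1)
    obtain ⟨x₀, hx₀mem, hx₀min⟩ :=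
      (isCompact_Icc).exists_isMinOn ⟨b 1, ⟨le_rfl, hb1M⟩⟩ hKc
    have hmin' : ∀ y ∈ Icc (b 1) M, W x₀ ≤ W y := fun y hy => hx₀min hy
    have hWx₀ : W x₀ ≤ W x := hmin' x ⟨hx, hxM⟩
    have hWx₀neg : W x₀ < 0 := lt_of_le_of_lt hWx₀ hneg
    have hb1x₀ : b 1 < x₀ := by
      rcases eq_or_lt_of_le hx₀mem.1 with he | hl
      · exfalso; rw [← he] at hWx₀neg; linarith
      · exact hl
    have hx₀M : x₀ < M := by
      rcases eq_or_lt_of_le hx₀mem.2 with he | hl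
      · exfalso
        have : W x < W M := hM₀ M (le_max_left _ _)
        rw [← he] at this; linarith
      · exact hl
    have hx₀pos : 0 < x₀ := lt_of_le_of_lt (le_trans (hbnn 0) hbord) hb1x₀
    have hx₀ne0 : x₀ ≠ b 0 := ne_of_gt (lt_of_le_of_lt hbord hb1x₀)
    have hx₀ne1 : x₀ ≠ b 1 := ne_of_gt hb1x₀
    have hlocmin : IsLocalMin W x₀ := hx₀min.isLocalMin (Icc_mem_nhds hb1x₀ hx₀M)
    have hdW0 : deriv W x₀ = 0 := hlocmin.deriv_eq_zero
    -- second derivative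
    set U : Set ℝ := Ioi (0:ℝ) \ {b 0, b 1} with hU
    have hUopen : IsOpen U := isOpen_Ioi.sdiff (Set.toFinite {b 0, b 1}).isClosed
    have hx₀U : x₀ ∈ U := ⟨hx₀pos, by simp [hx₀ne0, hx₀ne1]⟩
    have hg : ∀ i, DifferentiableAt ℝ (deriv (V i)) x₀ := by
      intro i
      have h2 : ContDiffOn ℝ 1 (deriv (V i)) U :=
        (hC2 i).deriv_of_isOpen hUopen (by norm_num)
      exact (h2.differentiableOn one_ne_zero).differentiableAt (hUopen.mem_nhds hx₀U)
    set g : ℝ → ℝ := fun y => deriv (V 1) y - deriv (V 0) y with hgdef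
    have hgdiff : DifferentiableAt ℝ g x₀ := (hg 1).sub (hg 0)
    have hEq : deriv W =ᶠ[nhds x₀] g := by
      filter_upwards [isOpen_Ioi.mem_nhds hx₀pos] with y hy
      exact hderivW y hy
    have hq : HasDerivAt (deriv W) (deriv g x₀) x₀ :=
      hgdiff.hasDerivAt.congr_of_eventuallyEq hEq
    have hdnbhd : ∀ᶠ y in nhds x₀, DifferentiableAt ℝ W y := by
      filter_upwards [isOpen_Ioi.mem_nhds hx₀pos] with y hy
      exact hWdiff y hy
    have hqnn : 0 ≤ deriv g x₀ := secondDerivTest hdnbhd hlocmin hq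
    have hderivg : deriv g x₀ = deriv (deriv (V 1)) x₀ - deriv (deriv (V 0)) x₀ :=
      deriv_sub (hg 1) (hg 0)
    -- ODE at x₀
    have hbx0 : b 0 ≤ x₀ := (hbord.trans hb1x₀.le)
    have hbx1 : b 1 ≤ x₀ := hb1x₀.le
    have E0 := hODE 0 x₀ hx₀pos hx₀ne0 hx₀ne1
    have E1 := hODE 1 x₀ hx₀pos hx₀ne0 hx₀ne1
    rw [if_pos hbx0, if_pos hbx1] at E0 E1
    have hdeq : deriv (V 1) x₀ = deriv (V 0) x₀ := by
      have := hderivW x₀ hx₀pos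
      rw [hdW0] at this
      linarith
    have hWx₀eq : W x₀ = V 1 x₀ - V 0 x₀ := rfl
    have hσnn : 0 ≤ σ x₀ ^ 2 := sq_nonneg _
    have hprod : 0 ≤ (1/2) * σ x₀ ^ 2 * (deriv (deriv (V 1)) x₀ - deriv (deriv (V 0)) x₀) := by
      rw [← hderivg]
      positivity
    rw [hdeq] at E1
    have hrW : r * (V 1 x₀ - V 0 x₀) < 0 :=
      mul_neg_of_pos_of_neg hr (hWx₀eq ▸ hWx₀neg)
    linarith [hprod, E0, E1, hrW, hKord]
  intro x hx
  rcases le_or_gt x (b 1) with h | h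
  · exact step2 x hx h
  · exact step3 x h.le
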